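/- Under the same anti-symmetry hypotheses, a vector x ∈ ℝ^{n_q+1} lies in the kernel of the Toeplitz matrix A^{(n+j)} if and only if R_{n_q+1} x lies in the kernel of A^{(n−j−1)}. Consequently the denominator coefficient vectors of the Padé–Chebyshev type approximants of orders [(n−j−1)/n_q] and [(n+j)/n_q] are related by q^{n−j−1} = R_{n_q+1} q^{n+j}. -/

import Mathlib

def flipMatrix (m : ℕ) : Matrix (Fin m) (Fin m) ℝ :=
  fun i j => if (i : ℕ) + (j : ℕ) = m - 1 then 1 else 0

def toeplitzPade (c : ℕ → ℝ) (nq d : ℕ) : Matrix (Fin nq) (Fin (nq + 1)) ℝ :=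
  fun r s => c (d + (r : ℕ) + 1 - (s : ℕ))

lemma flip_mulVec (m : ℕ) (x : Fin (m+1) → ℝ) (i : Fin (m+1)) :
    (flipMatrix (m+1)).mulVec x i = x i.rev := by
  unfold flipMatrix
  simp only [Matrix.mulVec, dotProduct]
  rw [Finset.sum_eq_single i.rev]
  · have h : (i : ℕ) + (i.rev : ℕ) = m + 1 - 1 := by
      rw [Fin.val_rev]; omega
    rw [if_pos h, one_mul]
  · intro b _ hb
    rw [if_neg, zero_mul]
    intro hib
    apply hb
    apply Fin.ext
    rw [Fin.val_rev]
    omega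
  · intro h; exact absurd (Finset.mem_univ _) h

lemma core_anti (n : ℕ) (c : ℕ → ℝ)
    (hanti : ∀ m : ℕ, 1 ≤ m → m ≤ 2 * n →
      c (n + m) = - c (((n : ℤ) - (m : ℤ)).natAbs))
    (hzero : c n = 0)
    (a b : ℕ) (ha : 1 ≤ a) (hb : 1 ≤ b) (hab : a + b = 2 * n) :
    c a = - c b := by
  rcases lt_trichotomy a n with h | h | h
  · have hba : b = n + (n - a) := by omega
    have h2 := hanti (n - a) (by omega) (by omega)
    have h3 : ((n : ℤ) - ((n - a : ℕ) : ℤ)).natAbs = a := by omega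
    rw [hba, h2, h3, neg_neg]
  · have : b = n := by omega
    rw [h, this, hzero]; simp
  · have haa : a = n + (a - n) := by omega
    have h2 := hanti (a - n) (by omega) (by omega)
    have h3 : ((n : ℤ) - ((a - n : ℕ) : ℤ)).natAbs = b := by omega
    rw [haa, h2, h3]

lemma key (n nq j : ℕ) (hnq : 1 ≤ nq) (hnq' : nq < n - 1)
    (hj : j ≤ n - nq - 1) (c : ℕ → ℝ)
    (hanti : ∀ m : ℕ, 1 ≤ m → m ≤ 2 * n →
      c (n + m) = - c (((n : ℤ) - (m : ℤ)).natAbs))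
    (hzero : c n = 0) (x : Fin (nq + 1) → ℝ) (r : Fin nq) :
    (toeplitzPade c nq (n - j - 1)).mulVec ((flipMatrix (nq + 1)).mulVec x) r
      = - (toeplitzPade c nq (n + j)).mulVec x r.rev := by
  rw [Matrix.mulVec, Matrix.mulVec, dotProduct, dotProduct, ← Finset.sum_neg_distrib]
  rw [← Equiv.sum_comp Fin.revPerm
    (fun s => toeplitzPade c nq (n - j - 1) r s * (flipMatrix (nq+1)).mulVec x s)]
  apply Finset.sum_congr rfl
  intro s _
  simp only [Fin.revPerm_apply]
  rw [flip_mulVec, Fin.rev_rev, toeplitzPade, toeplitzPade, ← neg_mul]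
  congr 1
  have hr : (r : ℕ) < nq := r.isLt
  have hs : (s : ℕ) < nq + 1 := s.isLt
  rw [Fin.val_rev, Fin.val_rev]
  apply core_anti n c hanti hzero <;> omega

theorem toeplitz_flip_kernel (n nq j : ℕ) (hnq : 1 ≤ nq) (hnq' : nq < n - 1)
    (hj : j ≤ n - nq - 1) (c : ℕ → ℝ)
    (hanti : ∀ m : ℕ, 1 ≤ m → m ≤ 2 * n →
      c (n + m) = - c (((n : ℤ) - (m : ℤ)).natAbs))
    (hzero : c n = 0) :
    (∀ x : Fin (nq + 1) → ℝ,
      (toeplitzPade c nq (n + j)).mulVec x = 0 ↔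
        (toeplitzPade c nq (n - j - 1)).mulVec ((flipMatrix (nq + 1)).mulVec x) = 0) ∧
    (∀ q : Fin (nq + 1) → ℝ, q ≠ 0 →
      (toeplitzPade c nq (n + j)).mulVec q = 0 →
        (flipMatrix (nq + 1)).mulVec q ≠ 0 ∧
        (toeplitzPade c nq (n - j - 1)).mulVec ((flipMatrix (nq + 1)).mulVec q) = 0) := by
  have hiff : ∀ x : Fin (nq + 1) → ℝ,
      (toeplitzPade c nq (n + j)).mulVec x = 0 ↔
        (toeplitzPade c nq (n - j - 1)).mulVec ((flipMatrix (nq + 1)).mulVec x) = 0 := by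
    intro x
    constructor
    · intro h
      funext r
      rw [key n nq j hnq hnq' hj c hanti hzero x r, h]
      simp
    · intro h
      funext r
      have := key n nq j hnq hnq' hj c hanti hzero x r.rev
      rw [h, Fin.rev_rev] at this
      have h0 : (0 : Fin nq → ℝ) r.rev = 0 := rfl
      rw [h0] at this
      simpa using this.symm
  refine ⟨hiff, fun q hq h0 => ⟨?_, (hiff q).mp h0⟩⟩
  intro hflip
  apply hq
  funext i
  have h1 : (flipMatrix (nq+1)).mulVec ((flipMatrix (nq+1)).mulVec q) i = q i := by
    rw [flip_mulVec, flip_mulVec, Fin.rev_rev]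
  rw [hflip, Matrix.mulVec_zero] at h1
  simpa using h1.symm
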